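/- For a univariate random variable X with continuous distribution function F and finite first moment, the Gini mean difference satisfies E|X1 - X2| = 4 Cov(X, F(X)), where X1, X2 are independent copies of X. -/

import Mathlib

open MeasureTheory Set Filter

/-- For a univariate random variable with continuous distribution function `F` and finite
first moment, the Gini mean difference satisfies `E|X₁ - X₂| = 4 Cov(X, F(X))`. -/
theorem gini_eq_four_cov
    (ν : Measure ℝ) [IsProbabilityMeasure ν]
    (F : ℝ → ℝ) (hF : ∀ x, F x = (ν (Set.Iic x)).toReal)
    (hFcont : Continuous F)
    (hint : Integrable (fun x => x) ν) :
    ∫ p : ℝ × ℝ, |p.1 - p.2| ∂(ν.prod ν) =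
      4 * ((∫ x, x * F x ∂ν) - (∫ x, x ∂ν) * (∫ x, F x ∂ν)) := by
  have hFmeas : Measurable F := hFcont.measurable
  have hF0 : ∀ x, 0 ≤ F x := fun x => by rw [hF]; exact ENNReal.toReal_nonneg
  have hF1 : ∀ x, F x ≤ 1 := by
    intro x
    rw [hF]
    exact ENNReal.toReal_le_of_le_ofReal zero_le_one (by simpa using prob_le_one)
  -- the measure of `Iio a` equals `F a` (continuity of `F` kills the atom at `a`)
  have hIio : ∀ a : ℝ, (ν (Iio a)).toReal = F a := by
    intro a
    refine le_antisymm ?_ ?_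
    · rw [hF]
      exact ENNReal.toReal_mono (measure_ne_top _ _) (measure_mono Iio_subset_Iic_self)
    · have hseq : Tendsto (fun n : ℕ => a - 1 / (n + 1)) atTop (nhds a) := by
        have h0 : Tendsto (fun n : ℕ => 1 / ((n : ℝ) + 1)) atTop (nhds 0) :=
          tendsto_one_div_add_atTop_nhds_zero_nat
        simpa using (tendsto_const_nhds (x := a) (f := atTop)).sub h0
      have hFt : Tendsto (fun n : ℕ => F (a - 1 / (n + 1))) atTop (nhds (F a)) :=
        (hFcont.tendsto a).comp hseq
      refine le_of_tendsto hFt (Filter.Eventually.of_forall fun n => ?_)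
      rw [hF]
      refine ENNReal.toReal_mono (measure_ne_top _ _) (measure_mono (Iic_subset_Iio.mpr ?_))
      have : (0 : ℝ) < 1 / (n + 1) := by positivity
      linarith
  have hIci : ∀ a : ℝ, (ν (Ici a)).toReal = 1 - F a := by
    intro a
    have h1 : Ici a = (Iio a)ᶜ := compl_Iio.symm
    rw [h1, measure_compl measurableSet_Iio (measure_ne_top _ _), measure_univ,
      ENNReal.toReal_sub_of_le (by simpa using prob_le_one) (by norm_num), hIio]
    simp
  -- integrability facts
  have hFint : Integrable F ν := by
    refine Integrable.mono' (integrable_const (1 : ℝ)) hFmeas.aestronglyMeasurable ?_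
    exact Filter.Eventually.of_forall fun x => by
      rw [Real.norm_eq_abs, abs_of_nonneg (hF0 x)]; exact hF1 x
  have hxF : Integrable (fun x => x * F x) ν := by
    have : Integrable (fun x => F x * x) ν := by
      refine hint.bdd_mul hFmeas.aestronglyMeasurable (c := 1) (Filter.Eventually.of_forall fun x => ?_)
      rw [Real.norm_eq_abs, abs_of_nonneg (hF0 x)]; exact hF1 x
    simpa [mul_comm] using this
  have hmp1 : MeasurePreserving Prod.fst (ν.prod ν) ν :=
    ⟨measurable_fst, by simp [Measure.map_fst_prod]⟩
  have hmp2 : MeasurePreserving Prod.snd (ν.prod ν) ν :=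
    ⟨measurable_snd, by simp [Measure.map_snd_prod]⟩
  have hi1 : Integrable (fun p : ℝ × ℝ => p.1) (ν.prod ν) :=
    (hmp1.integrable_comp hint.aestronglyMeasurable).mpr hint
  have hi2 : Integrable (fun p : ℝ × ℝ => p.2) (ν.prod ν) :=
    (hmp2.integrable_comp hint.aestronglyMeasurable).mpr hint
  -- the set {p | p.2 ≤ p.1}
  set S : Set (ℝ × ℝ) := {p : ℝ × ℝ | p.2 ≤ p.1} with hS_def
  have hS : MeasurableSet S := measurableSet_le measurable_snd measurable_fst
  set f1 : ℝ × ℝ → ℝ := S.indicator (fun p => p.1) with hf1_def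
  set f2 : ℝ × ℝ → ℝ := S.indicator (fun p => p.2) with hf2_def
  set χ : ℝ × ℝ → ℝ := S.indicator (fun _ => (1 : ℝ)) with hχ_def
  have hf1int : Integrable f1 (ν.prod ν) := hi1.indicator hS
  have hf2int : Integrable f2 (ν.prod ν) := hi2.indicator hS
  have hχint : Integrable χ (ν.prod ν) := (integrable_const (1 : ℝ)).indicator hS
  -- Fubini computations
  have hf1_eval : ∫ p, f1 p ∂(ν.prod ν) = ∫ x, x * F x ∂ν := by
    rw [integral_prod _ hf1int]
    refine integral_congr_ae (Filter.Eventually.of_forall fun x => ?_)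
    show (∫ y, f1 (x, y) ∂ν) = x * F x
    have : (fun y => f1 (x, y)) = (Iic x).indicator (fun _ => x) := by
      funext y
      by_cases h : y ≤ x
      · simp [hf1_def, indicator_of_mem, hS_def, h, Set.indicator_of_mem (mem_Iic.mpr h)]
      · simp [hf1_def, hS_def, h, Set.indicator_of_notMem, mem_Iic]
    rw [this, integral_indicator measurableSet_Iic, setIntegral_const, measureReal_def, hF, smul_eq_mul,
      mul_comm]
  have hf2_eval : ∫ p, f2 p ∂(ν.prod ν) = ∫ y, y * (1 - F y) ∂ν := by
    rw [integral_prod_symm _ hf2int]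
    refine integral_congr_ae (Filter.Eventually.of_forall fun y => ?_)
    show (∫ x, f2 (x, y) ∂ν) = y * (1 - F y)
    have : (fun x => f2 (x, y)) = (Ici y).indicator (fun _ => y) := by
      funext x
      by_cases h : y ≤ x
      · simp [hf2_def, hS_def, h, Set.indicator_of_mem (mem_Ici.mpr h)]
      · simp [hf2_def, hS_def, h, Set.indicator_of_notMem, mem_Ici]
    rw [this, integral_indicator measurableSet_Ici, setIntegral_const, measureReal_def, hIci, smul_eq_mul,
      mul_comm]
  have hχ_eval1 : ∫ p, χ p ∂(ν.prod ν) = ∫ x, F x ∂ν := by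
    rw [integral_prod _ hχint]
    refine integral_congr_ae (Filter.Eventually.of_forall fun x => ?_)
    show (∫ y, χ (x, y) ∂ν) = F x
    have : (fun y => χ (x, y)) = (Iic x).indicator (fun _ => (1 : ℝ)) := by
      funext y
      by_cases h : y ≤ x
      · simp [hχ_def, hS_def, h, Set.indicator_of_mem (mem_Iic.mpr h)]
      · simp [hχ_def, hS_def, h, Set.indicator_of_notMem, mem_Iic]
    rw [this, integral_indicator measurableSet_Iic, setIntegral_const, measureReal_def, hF, smul_eq_mul,
      mul_one]
  have hχ_eval2 : ∫ p, χ p ∂(ν.prod ν) = ∫ y, (1 - F y) ∂ν := by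
    rw [integral_prod_symm _ hχint]
    refine integral_congr_ae (Filter.Eventually.of_forall fun y => ?_)
    show (∫ x, χ (x, y) ∂ν) = 1 - F y
    have : (fun x => χ (x, y)) = (Ici y).indicator (fun _ => (1 : ℝ)) := by
      funext x
      by_cases h : y ≤ x
      · simp [hχ_def, hS_def, h, Set.indicator_of_mem (mem_Ici.mpr h)]
      · simp [hχ_def, hS_def, h, Set.indicator_of_notMem, mem_Ici]
    rw [this, integral_indicator measurableSet_Ici, setIntegral_const, measureReal_def, hIci, smul_eq_mul,
      mul_one]
  -- E[F(X)] = 1/2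
  have hEF : ∫ x, F x ∂ν = 1 / 2 := by
    have h2 : ∫ y, (1 - F y) ∂ν = 1 - ∫ x, F x ∂ν := by
      rw [integral_sub (integrable_const 1) hFint]
      simp
    have := hχ_eval1.symm.trans hχ_eval2
    rw [h2] at this
    linarith
  -- pointwise identity
  have habs : (fun p : ℝ × ℝ => |p.1 - p.2|) =
      fun p : ℝ × ℝ => 2 * (f1 p - f2 p) - (p.1 - p.2) := by
    funext p
    have hmem : ∀ q : ℝ × ℝ, q ∈ S ↔ q.2 ≤ q.1 := fun q => Iff.rfl
    by_cases h : p.2 ≤ p.1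
    · rw [abs_of_nonneg (by linarith)]
      simp only [hf1_def, hf2_def]
      rw [Set.indicator_of_mem ((hmem p).mpr h), Set.indicator_of_mem ((hmem p).mpr h)]
      ring
    · rw [abs_of_neg (by push_neg at h; linarith)]
      simp only [hf1_def, hf2_def]
      rw [Set.indicator_of_notMem (fun hc => h ((hmem p).mp hc)),
        Set.indicator_of_notMem (fun hc => h ((hmem p).mp hc))]
      ring
  have hmean : ∫ p : ℝ × ℝ, (p.1 - p.2) ∂(ν.prod ν) = 0 := by
    rw [integral_sub hi1 hi2]
    have h1 : ∫ p : ℝ × ℝ, p.1 ∂(ν.prod ν) = ∫ x, x ∂ν := by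
      rw [integral_prod _ hi1]
      simp [integral_const]
    have h2 : ∫ p : ℝ × ℝ, p.2 ∂(ν.prod ν) = ∫ x, x ∂ν := by
      rw [integral_prod_symm _ hi2]
      simp [integral_const]
    rw [h1, h2, sub_self]
  have hf2' : ∫ y, y * (1 - F y) ∂ν = (∫ x, x ∂ν) - ∫ x, x * F x ∂ν := by
    have : (fun y => y * (1 - F y)) = fun y => y - y * F y := by funext y; ring
    rw [this, integral_sub hint hxF]
  calc ∫ p : ℝ × ℝ, |p.1 - p.2| ∂(ν.prod ν)
      = ∫ p : ℝ × ℝ, (2 * (f1 p - f2 p) - (p.1 - p.2)) ∂(ν.prod ν) := by rw [habs]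
    _ = (∫ p, 2 * (f1 p - f2 p) ∂(ν.prod ν)) - ∫ p : ℝ × ℝ, (p.1 - p.2) ∂(ν.prod ν) := by
        exact integral_sub (((hf1int.sub hf2int).const_mul 2)) (hi1.sub hi2)
    _ = 2 * ((∫ p, f1 p ∂(ν.prod ν)) - ∫ p, f2 p ∂(ν.prod ν)) := by
        rw [hmean, sub_zero, integral_const_mul, integral_sub hf1int hf2int]
    _ = 2 * ((∫ x, x * F x ∂ν) - ((∫ x, x ∂ν) - ∫ x, x * F x ∂ν)) := by
        rw [hf1_eval, hf2_eval, hf2']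
    _ = 4 * ((∫ x, x * F x ∂ν) - (∫ x, x ∂ν) * (∫ x, F x ∂ν)) := by
        rw [hEF]; ring
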